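/- Let n ≥ 2, m = (m_1,…,m_n) ∈ ℕ^n with every m_i ≥ 2, and q = (q_{ij}) ∈ M_n(k^×) with q_{ii} = 1 and q_{ij}q_{ji} = 1 for all 1 ≤ i,j ≤ n. If for all i,j the scalar q_{ij} is a root of unity whose order divides gcd(m_i − 1, m_j − 1), then the quantum complete intersection Λ^n_{q,m} is a symmetric Frobenius algebra; explicitly, the pairing β given on monomials by β(x_1^{a_1}⋯x_n^{a_n} ⊗ x_1^{b_1}⋯x_n^{b_n}) = (∏_{j=2}^{n} ∏_{i=1}^{j−1} q_{ji}^{a_i b_j}) · ∏_{l=1}^{n} δ_{a_l+b_l, m_l−1} is an associative non-degenerate pairing satisfying β∘σ = β, where σ is the flip. -/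

import Mathlib

open scoped TensorProduct

namespace TTP

section Defs

variable (k : Type*) [Field k]

section MidMap

variable {X P Q Y R S : Type*}
  [AddCommGroup X] [Module k X] [AddCommGroup P] [Module k P]
  [AddCommGroup Q] [Module k Q] [AddCommGroup Y] [Module k Y]
  [AddCommGroup R] [Module k R] [AddCommGroup S] [Module k S]

/-- The map `1_X ⊗ f ⊗ 1_Y` (with the canonical reassociations). -/
noncomputable def midMap (f : P ⊗[k] Q →ₗ[k] R ⊗[k] S) :
    (X ⊗[k] P) ⊗[k] (Q ⊗[k] Y) →ₗ[k] (X ⊗[k] R) ⊗[k] (S ⊗[k] Y) :=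
  (TensorProduct.assoc k (X ⊗[k] R) S Y).toLinearMap
    ∘ₗ TensorProduct.map (TensorProduct.assoc k X R S).symm.toLinearMap LinearMap.id
    ∘ₗ TensorProduct.map (TensorProduct.map LinearMap.id f) LinearMap.id
    ∘ₗ TensorProduct.map (TensorProduct.assoc k X P Q).toLinearMap LinearMap.id
    ∘ₗ (TensorProduct.assoc k (X ⊗[k] P) Q Y).symm.toLinearMap

end MidMap

variable {A B : Type*} [AddCommGroup A] [Module k A] [AddCommGroup B] [Module k B]

/-- `(A, mul, unit)` is a unital associative `k`-algebra (diagrammatically). -/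
def IsUnitalAssoc (mul : A ⊗[k] A →ₗ[k] A) (unit : k →ₗ[k] A) : Prop :=
  mul ∘ₗ TensorProduct.map unit LinearMap.id ∘ₗ (TensorProduct.lid k A).symm.toLinearMap
      = LinearMap.id
  ∧ mul ∘ₗ TensorProduct.map LinearMap.id unit ∘ₗ (TensorProduct.rid k A).symm.toLinearMap
      = LinearMap.id
  ∧ mul ∘ₗ TensorProduct.map mul LinearMap.id
      = mul ∘ₗ TensorProduct.map LinearMap.id mul ∘ₗ (TensorProduct.assoc k A A A).toLinearMap

/-- `(A, comul, counit)` is a counital coassociative `k`-coalgebra (diagrammatically). -/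
def IsCounitalCoassoc (comul : A →ₗ[k] A ⊗[k] A) (counit : A →ₗ[k] k) : Prop :=
  (TensorProduct.lid k A).toLinearMap ∘ₗ TensorProduct.map counit LinearMap.id ∘ₗ comul
      = LinearMap.id
  ∧ (TensorProduct.rid k A).toLinearMap ∘ₗ TensorProduct.map LinearMap.id counit ∘ₗ comul
      = LinearMap.id
  ∧ TensorProduct.map comul LinearMap.id ∘ₗ comul
      = (TensorProduct.assoc k A A A).symm.toLinearMap
          ∘ₗ TensorProduct.map LinearMap.id comul ∘ₗ comul

/-- `τ : B ⊗ A → A ⊗ B` is a twisting map for the algebras `A` and `B`: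
it is compatible with both units and with both multiplications. -/
def IsTwisting (mulA : A ⊗[k] A →ₗ[k] A) (unitA : k →ₗ[k] A)
    (mulB : B ⊗[k] B →ₗ[k] B) (unitB : k →ₗ[k] B)
    (τ : B ⊗[k] A →ₗ[k] A ⊗[k] B) : Prop :=
  τ ∘ₗ TensorProduct.map LinearMap.id unitA
      = TensorProduct.map unitA LinearMap.id ∘ₗ (TensorProduct.comm k B k).toLinearMap
  ∧ τ ∘ₗ TensorProduct.map unitB LinearMap.id
      = TensorProduct.map LinearMap.id unitB ∘ₗ (TensorProduct.comm k k A).toLinearMap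
  ∧ τ ∘ₗ TensorProduct.map mulB mulA
      = TensorProduct.map mulA mulB ∘ₗ midMap k τ ∘ₗ TensorProduct.map τ τ ∘ₗ midMap k τ

/-- The multiplication `(∇_A ⊗ ∇_B) ∘ (1 ⊗ τ ⊗ 1)` of the twisted tensor product. -/
noncomputable def tMul (mulA : A ⊗[k] A →ₗ[k] A) (mulB : B ⊗[k] B →ₗ[k] B)
    (τ : B ⊗[k] A →ₗ[k] A ⊗[k] B) :
    (A ⊗[k] B) ⊗[k] (A ⊗[k] B) →ₗ[k] A ⊗[k] B :=
  TensorProduct.map mulA mulB ∘ₗ midMap k τ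

/-- The unit `(η_A ⊗ η_B) ∘ (k ≅ k ⊗ k)` of the twisted tensor product. -/
noncomputable def tUnit (unitA : k →ₗ[k] A) (unitB : k →ₗ[k] B) : k →ₗ[k] A ⊗[k] B :=
  TensorProduct.map unitA unitB ∘ₗ (TensorProduct.lid k k).symm.toLinearMap

/-- The comultiplication `(1 ⊗ τ⁻¹ ⊗ 1) ∘ (Δ_A ⊗ Δ_B)` of the twisted tensor product. -/
noncomputable def tComul (comulA : A →ₗ[k] A ⊗[k] A) (comulB : B →ₗ[k] B ⊗[k] B)
    (τinv : A ⊗[k] B →ₗ[k] B ⊗[k] A) :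
    A ⊗[k] B →ₗ[k] (A ⊗[k] B) ⊗[k] (A ⊗[k] B) :=
  midMap k τinv ∘ₗ TensorProduct.map comulA comulB

/-- The counit `(k ⊗ k ≅ k) ∘ (ε_A ⊗ ε_B)` of the twisted tensor product. -/
noncomputable def tCounit (counitA : A →ₗ[k] k) (counitB : B →ₗ[k] k) :
    A ⊗[k] B →ₗ[k] k :=
  (TensorProduct.lid k k).toLinearMap ∘ₗ TensorProduct.map counitA counitB

/-- Compatibility of `τ` with the counits (diagram (5) of the paper). -/
def CounitCompat (counitA : A →ₗ[k] k) (counitB : B →ₗ[k] k)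
    (τ : B ⊗[k] A →ₗ[k] A ⊗[k] B) : Prop :=
  TensorProduct.map counitA LinearMap.id ∘ₗ τ
      = (TensorProduct.comm k B k).toLinearMap ∘ₗ TensorProduct.map LinearMap.id counitA
  ∧ TensorProduct.map LinearMap.id counitB ∘ₗ τ
      = (TensorProduct.comm k k A).toLinearMap ∘ₗ TensorProduct.map counitB LinearMap.id

/-- Compatibility of `τ` with the comultiplications (diagram (6) of the paper):
`(Δ_A ⊗ Δ_B)∘τ = (1⊗τ⊗1)∘(τ⊗τ)∘(1⊗τ⊗1)∘(Δ_B ⊗ Δ_A)`. -/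
def ComulCompat (comulA : A →ₗ[k] A ⊗[k] A) (comulB : B →ₗ[k] B ⊗[k] B)
    (τ : B ⊗[k] A →ₗ[k] A ⊗[k] B) : Prop :=
  TensorProduct.map comulA comulB ∘ₗ τ
      = midMap k τ ∘ₗ TensorProduct.map τ τ ∘ₗ midMap k τ ∘ₗ TensorProduct.map comulB comulA

/-- `(f ⊗ 1_B) ∘ τ = (1_A ⊗ τ) ∘ (τ ⊗ 1_A) ∘ (1_B ⊗ f)` for `f : A → A ⊗ A`. -/
def MidACompat (f : A →ₗ[k] A ⊗[k] A) (τ : B ⊗[k] A →ₗ[k] A ⊗[k] B) : Prop :=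
  TensorProduct.map f LinearMap.id ∘ₗ τ
    = (TensorProduct.assoc k A A B).symm.toLinearMap
      ∘ₗ TensorProduct.map LinearMap.id τ
      ∘ₗ (TensorProduct.assoc k A B A).toLinearMap
      ∘ₗ TensorProduct.map τ LinearMap.id
      ∘ₗ (TensorProduct.assoc k B A A).symm.toLinearMap
      ∘ₗ TensorProduct.map LinearMap.id f

/-- `(1_A ⊗ g) ∘ τ = (τ ⊗ 1_B) ∘ (1_B ⊗ τ) ∘ (g ⊗ 1_A)` for `g : B → B ⊗ B`. -/
def MidBCompat (g : B →ₗ[k] B ⊗[k] B) (τ : B ⊗[k] A →ₗ[k] A ⊗[k] B) : Prop :=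
  TensorProduct.map LinearMap.id g ∘ₗ τ
    = (TensorProduct.assoc k A B B).toLinearMap
      ∘ₗ TensorProduct.map τ LinearMap.id
      ∘ₗ (TensorProduct.assoc k B A B).symm.toLinearMap
      ∘ₗ TensorProduct.map LinearMap.id τ
      ∘ₗ (TensorProduct.assoc k B B A).toLinearMap
      ∘ₗ TensorProduct.map g LinearMap.id

/-- `(A, mul, unit, comul, counit)` is a Frobenius algebra (diagrammatically). -/
def IsFrobenius (mul : A ⊗[k] A →ₗ[k] A) (unit : k →ₗ[k] A)
    (comul : A →ₗ[k] A ⊗[k] A) (counit : A →ₗ[k] k) : Prop :=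
  IsUnitalAssoc k mul unit
  ∧ IsCounitalCoassoc k comul counit
  ∧ comul ∘ₗ mul
      = TensorProduct.map LinearMap.id mul ∘ₗ (TensorProduct.assoc k A A A).toLinearMap
          ∘ₗ TensorProduct.map comul LinearMap.id
  ∧ comul ∘ₗ mul
      = TensorProduct.map mul LinearMap.id ∘ₗ (TensorProduct.assoc k A A A).symm.toLinearMap
          ∘ₗ TensorProduct.map LinearMap.id comul

/-- `(A, mul, unit, comul, counit)` is a bialgebra (diagrammatically). -/
def IsBialgebra (mul : A ⊗[k] A →ₗ[k] A) (unit : k →ₗ[k] A)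
    (comul : A →ₗ[k] A ⊗[k] A) (counit : A →ₗ[k] k) : Prop :=
  IsUnitalAssoc k mul unit
  ∧ IsCounitalCoassoc k comul counit
  ∧ counit ∘ₗ mul = (TensorProduct.lid k k).toLinearMap ∘ₗ TensorProduct.map counit counit
  ∧ comul ∘ₗ unit = TensorProduct.map unit unit ∘ₗ (TensorProduct.lid k k).symm.toLinearMap
  ∧ counit ∘ₗ unit = LinearMap.id
  ∧ comul ∘ₗ mul
      = TensorProduct.map mul mul ∘ₗ midMap k (TensorProduct.comm k A A).toLinearMap
          ∘ₗ TensorProduct.map comul comul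

/-- `(A, mul, unit, comul, counit)` is a Hopf algebra: a bialgebra with an antipode. -/
def IsHopf (mul : A ⊗[k] A →ₗ[k] A) (unit : k →ₗ[k] A)
    (comul : A →ₗ[k] A ⊗[k] A) (counit : A →ₗ[k] k) : Prop :=
  IsBialgebra k mul unit comul counit
  ∧ ∃ S : A →ₗ[k] A,
      mul ∘ₗ TensorProduct.map S LinearMap.id ∘ₗ comul = unit ∘ₗ counit
      ∧ mul ∘ₗ TensorProduct.map LinearMap.id S ∘ₗ comul = unit ∘ₗ counit

/-- `Γ` is a right inverse of the multiplication which is a bimodule morphism,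
witnessing separability of the algebra. -/
def IsSeparableWith (mul : A ⊗[k] A →ₗ[k] A) (Γ : A →ₗ[k] A ⊗[k] A) : Prop :=
  mul ∘ₗ Γ = LinearMap.id
  ∧ Γ ∘ₗ mul ∘ₗ TensorProduct.map LinearMap.id mul
      = TensorProduct.map mul mul
          ∘ₗ (TensorProduct.assoc k A A (A ⊗[k] A)).symm.toLinearMap
          ∘ₗ TensorProduct.map LinearMap.id (TensorProduct.assoc k A A A).toLinearMap
          ∘ₗ TensorProduct.map LinearMap.id (TensorProduct.map Γ LinearMap.id)

/-- The pairing `β` is associative: `β∘(1⊗∇) = β∘(∇⊗1)`. -/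
def PairingAssoc (mul : A ⊗[k] A →ₗ[k] A) (β : A ⊗[k] A →ₗ[k] k) : Prop :=
  β ∘ₗ TensorProduct.map LinearMap.id mul ∘ₗ (TensorProduct.assoc k A A A).toLinearMap
    = β ∘ₗ TensorProduct.map mul LinearMap.id

/-- The pairing `β` is non-degenerate with co-pairing `α`:
`(1⊗β)∘(α⊗1) = 1_A` under the canonical isomorphisms. -/
def PairingNondeg (β : A ⊗[k] A →ₗ[k] k) (α : k →ₗ[k] A ⊗[k] A) : Prop :=
  (TensorProduct.rid k A).toLinearMap
      ∘ₗ TensorProduct.map LinearMap.id β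
      ∘ₗ (TensorProduct.assoc k A A A).toLinearMap
      ∘ₗ TensorProduct.map α LinearMap.id
      ∘ₗ (TensorProduct.lid k A).symm.toLinearMap = LinearMap.id

/-- The pairing `β` is symmetric: `β ∘ σ = β` for the flip `σ`. -/
def PairingSymm (β : A ⊗[k] A →ₗ[k] k) : Prop :=
  β ∘ₗ (TensorProduct.comm k A A).toLinearMap = β

end Defs

end TTP

namespace TTP

/-- The defining relations of the quantum complete intersection:
`x_i^{m_i} = 0` and `x_i x_j = q_{ij} x_j x_i`. -/
inductive QCIRel (k : Type*) [Field k] (n : ℕ) (q : Fin n → Fin n → kˣ) (m : Fin n → ℕ) :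
    FreeAlgebra k (Fin n) → FreeAlgebra k (Fin n) → Prop
  | pow (i : Fin n) : QCIRel k n q m (FreeAlgebra.ι k i ^ m i) 0
  | swap (i j : Fin n) :
      QCIRel k n q m (FreeAlgebra.ι k i * FreeAlgebra.ι k j)
        ((q i j : k) • (FreeAlgebra.ι k j * FreeAlgebra.ι k i))

/-- The quantum complete intersection `Λ^n_{q,m}`. -/
abbrev QCI (k : Type*) [Field k] (n : ℕ) (q : Fin n → Fin n → kˣ) (m : Fin n → ℕ) :=
  RingQuot (QCIRel k n q m)

/-- The generator `x_i` of the quantum complete intersection. -/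
noncomputable def qciX (k : Type*) [Field k] (n : ℕ) (q : Fin n → Fin n → kˣ)
    (m : Fin n → ℕ) (i : Fin n) : QCI k n q m :=
  RingQuot.mkAlgHom k (QCIRel k n q m) (FreeAlgebra.ι k i)

/-- The ordered monomial `x_1^{a_1} ⋯ x_n^{a_n}` in the quantum complete
intersection. -/
noncomputable def qciMonomial (k : Type*) [Field k] (n : ℕ) (q : Fin n → Fin n → kˣ)
    (m : Fin n → ℕ) (a : Fin n → ℕ) : QCI k n q m :=
  ((List.finRange n).map fun i => qciX k n q m i ^ a i).prod

end TTP

set_option maxHeartbeats 1600000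
set_option synthInstance.maxHeartbeats 1000000

namespace TTP
namespace Aux

variable {k : Type*} [Field k] {n : ℕ} (q : Fin n → Fin n → kˣ) (m : Fin n → ℕ)

local notation "X" => qciX k n q m
local notation "M" => qciMonomial k n q m

lemma xpow_rel (i : Fin n) : X i ^ m i = 0 := by
  have h := RingQuot.mkAlgHom_rel k (QCIRel.pow (q := q) (m := m) i)
  simpa [qciX, map_pow] using h

lemma xswap (i j : Fin n) : X i * X j = (q i j : k) • (X j * X i) := by
  have h := RingQuot.mkAlgHom_rel k (QCIRel.swap (q := q) (m := m) i j)
  simpa [qciX, map_mul, map_smul] using h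

lemma xswap_pow (j i : Fin n) (s : ℕ) :
    X j * X i ^ s = ((q j i : k) ^ s) • (X i ^ s * X j) := by
  induction s with
  | zero => simp
  | succ s ih =>
    rw [pow_succ, ← mul_assoc, ih, smul_mul_assoc, mul_assoc, xswap q m j i,
      mul_smul_comm, smul_smul, ← pow_succ, ← mul_assoc, ← pow_succ]

lemma pow_swap (j i : Fin n) (t s : ℕ) :
    X j ^ t * X i ^ s = ((q j i : k) ^ (t * s)) • (X i ^ s * X j ^ t) := by
  induction t with
  | zero => simp
  | succ t ih =>
    rw [pow_succ, mul_assoc, xswap_pow, mul_smul_comm, ← mul_assoc, ih,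
      smul_mul_assoc, smul_smul, mul_assoc, ← pow_succ, ← pow_add]
    congr 2
    ring

/-- Ordered product of powers of generators along a list of indices. -/
noncomputable def mlist (l : List (Fin n)) (e : Fin n → ℕ) : QCI k n q m :=
  (l.map fun i => X i ^ e i).prod

@[simp] lemma mlist_nil (e : Fin n → ℕ) : mlist q m [] e = 1 := rfl

@[simp] lemma mlist_cons (i : Fin n) (l : List (Fin n)) (e : Fin n → ℕ) :
    mlist q m (i :: l) e = X i ^ e i * mlist q m l e := by
  simp [mlist]

lemma mlist_append (l₁ l₂ : List (Fin n)) (e : Fin n → ℕ) :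
    mlist q m (l₁ ++ l₂) e = mlist q m l₁ e * mlist q m l₂ e := by
  simp [mlist]

lemma monomial_eq_mlist (e : Fin n → ℕ) : M e = mlist q m (List.finRange n) e := rfl

lemma mlist_congr (l : List (Fin n)) {e e' : Fin n → ℕ} (h : ∀ i ∈ l, e i = e' i) :
    mlist q m l e = mlist q m l e' := by
  unfold mlist
  rw [List.map_congr_left fun i hi => by rw [h i hi]]

/-- Moving `X j ^ t` from the left across a product of powers of generators. -/
lemma move_list (j : Fin n) (t : ℕ) (l : List (Fin n)) (e : Fin n → ℕ) :
    X j ^ t * mlist q m l e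
      = (l.map fun i => (q j i : k) ^ (t * e i)).prod • (mlist q m l e * X j ^ t) := by
  induction l with
  | nil => simp
  | cons i l ih =>
    rw [mlist_cons, ← mul_assoc, pow_swap, smul_mul_assoc, mul_assoc, ih,
      mul_smul_comm, smul_smul, List.map_cons, List.prod_cons, ← mul_assoc]

end Aux
end TTP
namespace TTP
namespace Aux

variable {k : Type*} [Field k] {n : ℕ} (q : Fin n → Fin n → kˣ) (m : Fin n → ℕ)

local notation "X" => qciX k n q m
local notation "M" => qciMonomial k n q m

lemma mem_take_finRange {t : ℕ} {i : Fin n} :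
    i ∈ (List.finRange n).take t ↔ (i : ℕ) < t := by
  constructor
  · intro h
    obtain ⟨p, hp, he⟩ := List.mem_iff_getElem.1 h
    rw [List.getElem_take] at he
    rw [List.getElem_finRange] at he
    subst he
    simp only [List.length_take, List.length_finRange, lt_min_iff] at hp
    simpa using hp.1
  · intro h
    refine List.mem_iff_getElem.2 ⟨i, ?_, ?_⟩
    · simp [List.length_take, List.length_finRange, h, i.isLt]
    · rw [List.getElem_take, List.getElem_finRange]
      simp
lemma mem_drop_finRange {t : ℕ} {i : Fin n} (h : i ∈ (List.finRange n).drop t) :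
    t ≤ (i : ℕ) := by
  obtain ⟨p, hp, he⟩ := List.mem_iff_getElem.1 h
  rw [List.getElem_drop, List.getElem_finRange] at he
  subst he
  simp

lemma finRange_split (j : Fin n) :
    List.finRange n
      = (List.finRange n).take (j : ℕ) ++ j :: (List.finRange n).drop ((j : ℕ) + 1) := by
  conv_lhs => rw [← List.take_append_drop (j : ℕ) (List.finRange n)]
  congr 1
  rw [List.drop_eq_getElem_cons (by simp [j.isLt]), List.getElem_finRange]
  congr 1

lemma monomial_split (j : Fin n) (e : Fin n → ℕ) :
    M e = mlist q m ((List.finRange n).take (j : ℕ)) e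
      * (X j ^ e j * mlist q m ((List.finRange n).drop ((j : ℕ) + 1)) e) := by
  rw [monomial_eq_mlist]
  conv_lhs => rw [finRange_split j]
  rw [mlist_append, mlist_cons]

lemma take_finRange_toFinset (j : Fin n) :
    ((List.finRange n).take (j : ℕ)).toFinset = Finset.Iio j := by
  ext i
  simp only [List.mem_toFinset, Finset.mem_Iio, mem_take_finRange]
  exact ⟨fun h => by exact Fin.lt_def.2 h, fun h => Fin.lt_def.1 h⟩

lemma take_prod_eq (j : Fin n) (f : Fin n → k) :
    (((List.finRange n).take (j : ℕ)).map f).prod = ∏ i ∈ Finset.Iio j, f i := by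
  rw [← take_finRange_toFinset j,
    List.prod_toFinset f ((List.nodup_finRange n).sublist (List.take_sublist _ _))]

/-- `X j ^ t * M c = (∏_{i<j} q_{ji}^{t c_i}) • M (c + t δ_j)`. -/
lemma pow_mul_monomial (j : Fin n) (t : ℕ) (c : Fin n → ℕ) :
    X j ^ t * M c
      = (∏ i ∈ Finset.Iio j, (q j i : k) ^ (t * c i))
          • M (fun l => if l = j then c j + t else c l) := by
  set c' : Fin n → ℕ := fun l => if l = j then c j + t else c l with hc'
  rw [monomial_split q m j c, monomial_split q m j c', ← mul_assoc, move_list,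
    take_prod_eq]
  have h1 : mlist q m ((List.finRange n).take (j : ℕ)) c
      = mlist q m ((List.finRange n).take (j : ℕ)) c' := by
    refine mlist_congr q m _ fun i hi => ?_
    have : (i : ℕ) < (j : ℕ) := mem_take_finRange.1 hi
    have hij : i ≠ j := by intro h; subst h; omega
    simp [hc', hij]
  have h2 : mlist q m ((List.finRange n).drop ((j : ℕ) + 1)) c
      = mlist q m ((List.finRange n).drop ((j : ℕ) + 1)) c' := by
    refine mlist_congr q m _ fun i hi => ?_
    have := mem_drop_finRange hi
    have hij : i ≠ j := by intro h; subst h; omega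
    simp [hc', hij]
  have h3 : c' j = c j + t := by simp [hc']
  rw [h1, h2, h3, smul_mul_assoc, mul_assoc, ← mul_assoc (X j ^ t), ← pow_add,
    Nat.add_comm t (c j)]

end Aux
end TTP
namespace TTP
namespace Aux

variable {k : Type*} [Field k] {n : ℕ} (q : Fin n → Fin n → kˣ) (m : Fin n → ℕ)

local notation "X" => qciX k n q m
local notation "M" => qciMonomial k n q m

lemma mlist_mul_monomial (b : Fin n → ℕ) (l : List (Fin n)) (hl : l.Pairwise (· < ·)) :
    ∀ c : Fin n → ℕ,
      mlist q m l b * M c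
        = (l.map fun j => ∏ i ∈ Finset.Iio j, (q j i : k) ^ (b j * c i)).prod
            • M (fun i => c i + if i ∈ l then b i else 0) := by
  induction l using List.reverseRecOn with
  | nil => intro c; simp
  | append_singleton l j ih =>
    intro c
    obtain ⟨hl', -, hcross⟩ := List.pairwise_append.1 hl
    have hcj : ∀ i ∈ l, i < j := fun i hi => hcross i hi j (by simp)
    have hjl : j ∉ l := fun h => lt_irrefl j (hcj j h)
    rw [mlist_append, mlist_cons, mlist_nil, mul_one, mul_assoc,
      pow_mul_monomial, mul_smul_comm, ih hl']
    set c' : Fin n → ℕ := fun l0 => if l0 = j then c j + b j else c l0 with hc'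
    rw [smul_smul]
    have hmap : (l.map fun j' => ∏ i ∈ Finset.Iio j', (q j' i : k) ^ (b j' * c' i))
        = l.map fun j' => ∏ i ∈ Finset.Iio j', (q j' i : k) ^ (b j' * c i) := by
      refine List.map_congr_left fun j' hj' => Finset.prod_congr rfl fun i hi => ?_
      have hij : i ≠ j := by
        have h1 : i < j' := Finset.mem_Iio.1 hi
        have h2 : j' < j := hcj j' hj'
        exact ne_of_lt (h1.trans h2)
      simp [hc', hij]
    have hfun : (fun i => c' i + if i ∈ l then b i else 0)
        = fun i => c i + if i ∈ l ++ [j] then b i else 0 := by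
      funext i
      by_cases hij : i = j
      · subst hij
        simp [hc', hjl]
      · simp [hc', hij, List.mem_append]
    rw [hmap, hfun, List.map_append, List.prod_append, List.map_singleton,
      List.prod_singleton, mul_comm]

lemma mul_monomial (b c : Fin n → ℕ) :
    M b * M c
      = (∏ j : Fin n, ∏ i ∈ Finset.Iio j, (q j i : k) ^ (b j * c i))
          • M (fun i => b i + c i) := by
  have h := mlist_mul_monomial q m b (List.finRange n) (List.pairwise_lt_finRange n) c
  have hfun : (fun i => c i + if i ∈ List.finRange n then b i else 0)
      = fun i => b i + c i := by
    funext i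
    simp [List.mem_finRange, Nat.add_comm]
  rw [monomial_eq_mlist, h, hfun, Fin.prod_univ_def]

lemma monomial_zero : M (fun _ => 0) = 1 := by
  simp [qciMonomial]

lemma prod_map_ite_eq {Mo : Type*} [Monoid Mo] (y : Fin n → Mo) (i : Fin n) :
    ∀ l : List (Fin n), l.Nodup → i ∈ l →
      (l.map fun j => if j = i then y j else 1).prod = y i := by
  intro l
  induction l with
  | nil => simp
  | cons a l ih =>
    intro hnd hmem
    rw [List.map_cons, List.prod_cons]
    by_cases ha : a = i
    · have hi_l : i ∉ l := fun h => (List.nodup_cons.1 hnd).1 (ha ▸ h)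
      have hmap : (l.map fun j => if j = i then y j else 1) = l.map fun _ => (1 : Mo) :=
        List.map_congr_left fun j hj => by
          have hji : j ≠ i := fun hji => hi_l (hji ▸ hj)
          simp [hji]
      rw [hmap]
      simp [ha]
    · have hi : i ∈ l := by
        rcases List.mem_cons.1 hmem with h | h
        · exact absurd h.symm ha
        · exact h
      rw [ih (List.nodup_cons.1 hnd).2 hi, if_neg ha, one_mul]

lemma monomial_single (i : Fin n) : M (fun l => if l = i then 1 else 0) = X i := by
  rw [qciMonomial]
  have : ((List.finRange n).map fun j => X j ^ (if j = i then 1 else 0))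
      = (List.finRange n).map fun j => if j = i then X j else 1 := by
    refine List.map_congr_left fun j _ => ?_
    by_cases hj : j = i <;> simp [hj]
  rw [this, prod_map_ite_eq (fun j => X j) i _ (List.nodup_finRange n) (List.mem_finRange i)]

lemma monomial_eq_zero {c : Fin n → ℕ} {l0 : Fin n} (h : m l0 ≤ c l0) : M c = 0 := by
  rw [monomial_split q m l0 c, show c l0 = m l0 + (c l0 - m l0) by omega, pow_add,
    xpow_rel]
  simp

lemma mul_mem_span {u v : QCI k n q m}
    (hu : u ∈ Submodule.span k (Set.range M)) (hv : v ∈ Submodule.span k (Set.range M)) :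
    u * v ∈ Submodule.span k (Set.range M) := by
  induction hu using Submodule.span_induction with
  | mem x hx =>
    obtain ⟨a, rfl⟩ := hx
    induction hv using Submodule.span_induction with
    | mem y hy =>
      obtain ⟨b, rfl⟩ := hy
      rw [mul_monomial]
      exact Submodule.smul_mem _ _ (Submodule.subset_span ⟨_, rfl⟩)
    | zero => simp
    | add y z _ _ hy hz => rw [mul_add]; exact Submodule.add_mem _ hy hz
    | smul r y _ hy => rw [mul_smul_comm]; exact Submodule.smul_mem _ _ hy
  | zero => simp
  | add y z _ _ hy hz => rw [add_mul]; exact Submodule.add_mem _ hy hz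
  | smul r y _ hy => rw [smul_mul_assoc]; exact Submodule.smul_mem _ _ hy

lemma span_top : Submodule.span k (Set.range M) = ⊤ := by
  rw [eq_top_iff]
  rintro u -
  obtain ⟨w, rfl⟩ := RingQuot.mkAlgHom_surjective k (QCIRel k n q m) u
  induction w using FreeAlgebra.induction with
  | grade0 r =>
    rw [AlgHom.commutes, Algebra.algebraMap_eq_smul_one, ← monomial_zero q m]
    exact Submodule.smul_mem _ _ (Submodule.subset_span ⟨_, rfl⟩)
  | grade1 i =>
    exact Submodule.subset_span ⟨_, monomial_single q m i⟩
  | mul a b ha hb =>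
    rw [map_mul]; exact mul_mem_span q m ha hb
  | add a b ha hb =>
    rw [map_add]; exact Submodule.add_mem _ ha hb

end Aux
end TTP
namespace TTP
namespace Aux

variable {k : Type*} [Field k] {n : ℕ} (q : Fin n → Fin n → kˣ) (m : Fin n → ℕ)

local notation "X" => qciX k n q m
local notation "M" => qciMonomial k n q m

/-- index set for the monomial basis -/
def Dm (m : Fin n → ℕ) : Type _ := {a : Fin n → ℕ // ∀ i, a i < m i}

/-- basis vector of the model, `0` if out of range -/
noncomputable def eM (c : Fin n → ℕ) : Dm m →₀ k :=
  if h : ∀ i, c i < m i then Finsupp.single ⟨c, h⟩ 1 else 0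

lemma single_eq_eM (a : Dm m) : (Finsupp.single a 1 : Dm m →₀ k) = eM m a.1 := by
  rw [eM, dif_pos a.2]
  congr

lemma eM_invalid {c : Fin n → ℕ} (h : ¬ ∀ i, c i < m i) : (eM m c : Dm m →₀ k) = 0 :=
  dif_neg h

/-- the coefficient picked up when `x_i` enters a monomial from the left -/
noncomputable def coeffL (i : Fin n) (c : Fin n → ℕ) : k :=
  ∏ j ∈ Finset.Iio i, (q i j : k) ^ (c j)

/-- left multiplication by `x_i` in the model -/
noncomputable def LL (i : Fin n) : (Dm m →₀ k) →ₗ[k] (Dm m →₀ k) :=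
  Finsupp.lsum k fun a => LinearMap.toSpanSingleton k _
    (coeffL q i a.1 • eM m (Function.update a.1 i (a.1 i + 1)))

lemma LL_eM (i : Fin n) (c : Fin n → ℕ) :
    LL q m i (eM m c)
      = coeffL q i c • eM m (Function.update c i (c i + 1)) := by
  by_cases h : ∀ l, c l < m l
  · have he : eM m c = Finsupp.single (⟨c, h⟩ : Dm m) (1 : k) := dif_pos h
    rw [he, LL]
    erw [Finsupp.lsum_single]
    rw [LinearMap.toSpanSingleton_apply, one_smul]
  · rw [eM_invalid m h, map_zero, eM_invalid m, smul_zero]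
    intro hall
    refine h fun l => lt_of_le_of_lt ?_ (hall l)
    by_cases hl : l = i
    · subst hl; simp
    · simp [Function.update_of_ne hl]

lemma coeffL_update_self (i : Fin n) (c : Fin n → ℕ) (v : ℕ) :
    coeffL q i (Function.update c i v) = coeffL q i c := by
  unfold coeffL
  refine Finset.prod_congr rfl fun j hj => ?_
  have : j ≠ i := ne_of_lt (Finset.mem_Iio.1 hj)
  rw [Function.update_of_ne this]

lemma LL_pow_eM (i : Fin n) (t : ℕ) (c : Fin n → ℕ) :
    (LL q m i ^ t) (eM m c)
      = (coeffL q i c ^ t : k) • eM m (Function.update c i (c i + t)) := by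
  induction t with
  | zero => simp [Function.update_eq_self]
  | succ t ih =>
    rw [pow_succ', Module.End.mul_apply, ih, map_smul, LL_eM, coeffL_update_self,
      smul_smul, Function.update_idem]
    congr 2
    · rw [pow_succ, mul_comm]
    · rw [Function.update_self, Nat.add_assoc]

lemma LL_pow_m (i : Fin n) : (LL q m i) ^ (m i) = 0 := by
  refine Finsupp.lhom_ext fun a b => ?_
  have hb : (Finsupp.single a b : Dm m →₀ k) = b • Finsupp.single a 1 := by
    rw [Finsupp.smul_single, smul_eq_mul, mul_one]
  rw [hb, map_smul, single_eq_eM, LL_pow_eM, eM_invalid, smul_zero, smul_zero,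
    LinearMap.zero_apply]
  intro hall
  have := hall i
  simp [Function.update_self] at this
lemma coeffL_update (i j' : Fin n) (c : Fin n → ℕ) :
    coeffL q i (Function.update c j' (c j' + 1))
      = coeffL q i c * (if j' < i then (q i j' : k) else 1) := by
  unfold coeffL
  have h1 : (∏ j ∈ Finset.Iio i, (q i j : k) ^ (Function.update c j' (c j' + 1) j))
      = ∏ j ∈ Finset.Iio i, ((q i j : k) ^ c j * (if j = j' then (q i j' : k) else 1)) := by
    refine Finset.prod_congr rfl fun j _ => ?_
    by_cases h : j = j'
    · subst h; simp [pow_succ]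
    · simp [Function.update_of_ne h, h]
  rw [h1, Finset.prod_mul_distrib, Finset.prod_ite_eq']
  simp [Finset.mem_Iio]

lemma LL_comm (hqdiag : ∀ i, q i i = 1) (hqinv : ∀ i j, q i j * q j i = 1)
    (i j : Fin n) :
    LL q m i * LL q m j = (q i j : k) • (LL q m j * LL q m i) := by
  refine Finsupp.lhom_ext fun a b => ?_
  have hb : (Finsupp.single a b : Dm m →₀ k) = b • Finsupp.single a 1 := by
    rw [Finsupp.smul_single, smul_eq_mul, mul_one]
  rw [hb, map_smul, map_smul, single_eq_eM]
  congr 1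
  rw [Module.End.mul_apply, LinearMap.smul_apply, Module.End.mul_apply,
    LL_eM, map_smul, LL_eM, LL_eM, map_smul, LL_eM]
  rw [coeffL_update q, coeffL_update q, smul_smul, smul_smul, smul_smul]
  have hvec : Function.update (Function.update a.1 j (a.1 j + 1)) i
        ((Function.update a.1 j (a.1 j + 1)) i + 1)
      = Function.update (Function.update a.1 i (a.1 i + 1)) j
        ((Function.update a.1 i (a.1 i + 1)) j + 1) := by
    by_cases hij : i = j
    · subst hij; rfl
    · rw [Function.update_of_ne (fun h => hij h) _ _,
        Function.update_of_ne (fun h => hij (h.symm)) _ _]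
      exact Function.update_comm (fun h => hij h.symm) _ _ _
  rw [hvec]
  congr 1
  have hq' : (q i j : k) * (q j i : k) = 1 := by
    have := hqinv i j
    rw [← Units.val_mul, this, Units.val_one]
  rcases lt_trichotomy i j with h | h | h
  · simp only [if_neg (asymm h), if_pos h, mul_one]
    have hr : (q i j : k) * coeffL q i a.1 * (coeffL q j a.1 * (q j i : k))
        = ((q i j : k) * (q j i : k)) * (coeffL q j a.1 * coeffL q i a.1) := by ring
    rw [hr, hq', one_mul]
  · subst h
    simp only [lt_irrefl, if_neg (lt_irrefl i)]
    have : ((q i i : kˣ) : k) = 1 := by rw [hqdiag i, Units.val_one]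
    rw [this]
    ring
  · simp only [if_pos h, if_neg (asymm h), mul_one]
    ring
/-- the representation of the free algebra on the model space -/
noncomputable def rho : FreeAlgebra k (Fin n) →ₐ[k] Module.End k (Dm m →₀ k) :=
  FreeAlgebra.lift k fun i => LL q m i

lemma rho_rel (hqdiag : ∀ i, q i i = 1) (hqinv : ∀ i j, q i j * q j i = 1) :
    ∀ ⦃x y : FreeAlgebra k (Fin n)⦄, QCIRel k n q m x y → rho q m x = rho q m y := by
  intro x y h
  cases h with
  | pow i =>
    rw [map_pow, map_zero, rho, FreeAlgebra.lift_ι_apply, LL_pow_m]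
  | swap i j =>
    rw [map_mul, map_smul, map_mul, rho, FreeAlgebra.lift_ι_apply,
      FreeAlgebra.lift_ι_apply, LL_comm q m hqdiag hqinv i j]

/-- the induced representation of the quantum complete intersection -/
noncomputable def rho' (hqdiag : ∀ i, q i i = 1) (hqinv : ∀ i j, q i j * q j i = 1) :
    QCI k n q m →ₐ[k] Module.End k (Dm m →₀ k) :=
  RingQuot.liftAlgHom k ⟨rho q m, rho_rel q m hqdiag hqinv⟩

variable (hqdiag : ∀ i, q i i = 1) (hqinv : ∀ i j, q i j * q j i = 1)

lemma rho'_X (i : Fin n) : rho' q m hqdiag hqinv (X i) = LL q m i := by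
  rw [qciX, rho', RingQuot.liftAlgHom_mkAlgHom_apply, rho, FreeAlgebra.lift_ι_apply]

/-- the linear "evaluation at the basis point 1" map realizing the PBW basis -/
noncomputable def phi : QCI k n q m →ₗ[k] (Dm m →₀ k) where
  toFun u := rho' q m hqdiag hqinv u (eM m fun _ => 0)
  map_add' u v := by simp [map_add]
  map_smul' r u := by simp [map_smul]

lemma LL_prods_apply (a : Fin n → ℕ) :
    ∀ l : List (Fin n), l.Pairwise (· < ·) →
      ((l.map fun i => LL q m i ^ a i).prod) (eM m fun _ => 0)
        = eM m fun j => if j ∈ l then a j else 0 := by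
  intro l
  induction l with
  | nil => simp
  | cons i l ih =>
    intro hl
    have hlt : ∀ j ∈ l, i < j := fun j hj => (List.pairwise_cons.1 hl).1 j hj
    have hnotmem : i ∉ l := fun h => lt_irrefl i (hlt i h)
    rw [List.map_cons, List.prod_cons, Module.End.mul_apply, ih (List.pairwise_cons.1 hl).2,
      LL_pow_eM]
    have hcoeff : coeffL q i (fun j => if j ∈ l then a j else 0) = 1 := by
      unfold coeffL
      refine Finset.prod_eq_one fun j hj => ?_
      have hj' : j ∉ l := fun h => absurd (hlt j h) (not_lt_of_gt (Finset.mem_Iio.1 hj))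
      simp [hj']
    have hfun : Function.update (fun j => if j ∈ l then a j else 0) i
          ((if i ∈ l then a i else 0) + a i)
        = fun j => if j ∈ i :: l then a j else 0 := by
      funext j
      by_cases hji : j = i
      · subst hji
        simp [Function.update_self, hnotmem]
      · simp [Function.update_of_ne hji, List.mem_cons, hji]
    rw [hcoeff, one_pow, one_smul]
    exact congrArg _ hfun

lemma phi_monomial (a : Fin n → ℕ) :
    phi q m hqdiag hqinv (M a) = eM m a := by
  show rho' q m hqdiag hqinv (M a) (eM m fun _ => 0) = eM m a
  rw [qciMonomial, map_list_prod]
  have : (List.map (⇑(rho' q m hqdiag hqinv)) ((List.finRange n).map fun i => X i ^ a i))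
      = (List.finRange n).map fun i => LL q m i ^ a i := by
    rw [List.map_map]
    exact List.map_congr_left fun i _ => by
      simp [Function.comp, map_pow, rho'_X]
  rw [this, LL_prods_apply q m a _ (List.pairwise_lt_finRange n)]
  have : (fun j => if j ∈ List.finRange n then a j else 0) = a := by
    funext j; simp [List.mem_finRange]
  rw [this]
/-- the pairing coefficient -/
noncomputable def Wf (a b : Fin n → ℕ) : k :=
  if ∀ l, a l + b l = m l - 1
    then ∏ j : Fin n, ∏ i ∈ Finset.Iio j, ((q j i : k) ^ (a i * b j))
    else 0

/-- the pairing on the model -/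
noncomputable def Bf : (Dm m →₀ k) →ₗ[k] (Dm m →₀ k) →ₗ[k] k :=
  Finsupp.lsum k fun a => LinearMap.toSpanSingleton k _
    (Finsupp.lsum k fun b => LinearMap.toSpanSingleton k k (Wf q m a.1 b.1))

lemma Bf_eM (hm : ∀ i, 2 ≤ m i) (a b : Fin n → ℕ) :
    Bf q m (eM m a) (eM m b) = Wf q m a b := by
  by_cases ha : ∀ i, a i < m i
  · by_cases hb : ∀ i, b i < m i
    · have hea : eM m a = Finsupp.single (⟨a, ha⟩ : Dm m) (1 : k) := dif_pos ha
      have heb : eM m b = Finsupp.single (⟨b, hb⟩ : Dm m) (1 : k) := dif_pos hb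
      rw [hea, heb, Bf]
      erw [Finsupp.lsum_single]
      rw [LinearMap.toSpanSingleton_apply, one_smul]
      erw [Finsupp.lsum_single]
      rw [LinearMap.toSpanSingleton_apply, one_smul]
    · rw [eM_invalid m hb, map_zero, Wf, if_neg]
      intro hall
      obtain ⟨l, hl⟩ := not_forall.1 hb
      have := hall l
      have hml := hm l
      omega
  · rw [eM_invalid m ha, map_zero, LinearMap.zero_apply, Wf, if_neg]
    intro hall
    obtain ⟨l, hl⟩ := not_forall.1 ha
    have := hall l
    have hml := hm l
    omega

/-- the pairing on the quantum complete intersection -/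
noncomputable def betaMap (hqdiag : ∀ i, q i i = 1) (hqinv : ∀ i j, q i j * q j i = 1) :
    QCI k n q m ⊗[k] QCI k n q m →ₗ[k] k :=
  TensorProduct.lift (((Bf q m).comp (phi q m hqdiag hqinv)).compl₂ (phi q m hqdiag hqinv))

variable (hqdiag : ∀ i, q i i = 1) (hqinv : ∀ i j, q i j * q j i = 1)

lemma betaMap_tmul (u v : QCI k n q m) :
    betaMap q m hqdiag hqinv (u ⊗ₜ[k] v)
      = Bf q m (phi q m hqdiag hqinv u) (phi q m hqdiag hqinv v) := by
  rw [betaMap, TensorProduct.lift.tmul]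
  rfl

lemma betaMap_monomial (hm : ∀ i, 2 ≤ m i) (a b : Fin n → ℕ) :
    betaMap q m hqdiag hqinv (M a ⊗ₜ[k] M b) = Wf q m a b := by
  rw [betaMap_tmul, phi_monomial, phi_monomial, Bf_eM q m hm]

lemma pow_eq_of' (E : kˣ) {e1 e2 f : ℕ} (h1 : E ^ (e1 + f) = 1) (h2 : E ^ (e2 + f) = 1) :
    E ^ e1 = E ^ e2 := by
  have h3 := h1.trans h2.symm
  rw [pow_add, pow_add] at h3
  exact mul_right_cancel h3

lemma pow_eq_of (E : kˣ) {e1 e2 f g : ℕ} (hf : E ^ f = 1) (hg : E ^ g = 1)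
    (h : e1 + f = e2 + g) : E ^ e1 = E ^ e2 := by
  have h2 : E ^ (e1 + f) = E ^ (e2 + g) := by rw [h]
  rw [pow_add, pow_add, hf, hg, mul_one, mul_one] at h2
  exact h2

lemma root1 (hqroot : ∀ i j, q i j ^ Nat.gcd (m i - 1) (m j - 1) = 1) (i j : Fin n) :
    q i j ^ (m i - 1) = 1 := by
  obtain ⟨d, hd⟩ := Nat.gcd_dvd_left (m i - 1) (m j - 1)
  rw [hd, pow_mul, hqroot i j, one_pow]

lemma root2 (hqroot : ∀ i j, q i j ^ Nat.gcd (m i - 1) (m j - 1) = 1) (i j : Fin n) :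
    q i j ^ (m j - 1) = 1 := by
  obtain ⟨d, hd⟩ := Nat.gcd_dvd_right (m i - 1) (m j - 1)
  rw [hd, pow_mul, hqroot i j, one_pow]

lemma Wf_symm (hqroot : ∀ i j, q i j ^ Nat.gcd (m i - 1) (m j - 1) = 1)
    (a b : Fin n → ℕ) : Wf q m a b = Wf q m b a := by
  unfold Wf
  by_cases h : ∀ l, a l + b l = m l - 1
  · rw [if_pos h, if_pos fun l => by rw [Nat.add_comm]; exact h l]
    refine Finset.prod_congr rfl fun j _ => Finset.prod_congr rfl fun i _ => ?_
    rw [← Units.val_pow_eq_pow_val, ← Units.val_pow_eq_pow_val]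
    congr 1
    refine pow_eq_of' (q j i) (f := a i * a j) ?_ ?_
    · rw [show a i * b j + a i * a j = (m j - 1) * a i by rw [← h j]; ring,
        pow_mul, root1 q m hqroot j i, one_pow]
    · rw [show b i * a j + a i * a j = (m i - 1) * a j by rw [← h i]; ring,
        pow_mul, root2 q m hqroot j i, one_pow]
  · rw [if_neg h, if_neg fun hc => h fun l => by rw [Nat.add_comm]; exact hc l]

lemma Wf_assoc (hqroot : ∀ i j, q i j ^ Nat.gcd (m i - 1) (m j - 1) = 1)
    (a b c : Fin n → ℕ) :
    (∏ j : Fin n, ∏ i ∈ Finset.Iio j, (q j i : k) ^ (b j * c i))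
        * Wf q m a (fun l => b l + c l)
      = (∏ j : Fin n, ∏ i ∈ Finset.Iio j, (q j i : k) ^ (a j * b i))
        * Wf q m (fun l => a l + b l) c := by
  unfold Wf
  by_cases h : ∀ l, a l + b l + c l = m l - 1
  · rw [if_pos fun l => by rw [← h l]; ring, if_pos fun l => by rw [← h l]]
    rw [← Finset.prod_mul_distrib, ← Finset.prod_mul_distrib]
    refine Finset.prod_congr rfl fun j _ => ?_
    rw [← Finset.prod_mul_distrib, ← Finset.prod_mul_distrib]
    refine Finset.prod_congr rfl fun i _ => ?_
    rw [← pow_add, ← pow_add, ← Units.val_pow_eq_pow_val, ← Units.val_pow_eq_pow_val]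
    congr 1
    refine pow_eq_of (q j i) (f := (m j - 1) * b i) (g := (m i - 1) * b j) ?_ ?_ ?_
    · rw [pow_mul, root1 q m hqroot j i, one_pow]
    · rw [pow_mul, root2 q m hqroot j i, one_pow]
    · rw [← h i, ← h j]; ring
  · rw [if_neg fun hc => h fun l => by rw [← hc l]; ring,
      if_neg fun hc => h fun l => by rw [← hc l], mul_zero, mul_zero]

/-- coefficients of the co-pairing -/
noncomputable def gam (a : Fin n → ℕ) : k :=
  ∏ j : Fin n, ∏ i ∈ Finset.Iio j, (((q j i)⁻¹ : kˣ) : k) ^ (a i * (m j - 1 - a j))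

lemma Wf_nondeg
    (hqroot : ∀ i j, q i j ^ Nat.gcd (m i - 1) (m j - 1) = 1)
    (c : Fin n → ℕ) (hc : ∀ i, c i < m i) :
    gam q m c * Wf q m (fun l => m l - 1 - c l) c = 1 := by
  unfold gam Wf
  rw [if_pos (fun l => by
    show m l - 1 - c l + c l = m l - 1
    have := hc l; omega)]
  rw [← Finset.prod_mul_distrib]
  refine Finset.prod_eq_one fun j _ => ?_
  rw [← Finset.prod_mul_distrib]
  refine Finset.prod_eq_one fun i _ => ?_
  show (((q j i)⁻¹ : kˣ) : k) ^ (c i * (m j - 1 - c j))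
      * (q j i : k) ^ ((m i - 1 - c i) * c j) = 1
  have hcj : c j ≤ m j - 1 := by have := hc j; omega
  have hci : c i ≤ m i - 1 := by have := hc i; omega
  have h1 : c i * (m j - 1 - c j) + c i * c j = (m j - 1) * c i := by
    rw [← Nat.mul_add, Nat.sub_add_cancel hcj, Nat.mul_comm]
  have h2 : (m i - 1 - c i) * c j + c i * c j = (m i - 1) * c j := by
    rw [← Nat.add_mul, Nat.sub_add_cancel hci]
  have hE : (q j i) ^ (c i * (m j - 1 - c j)) = (q j i) ^ ((m i - 1 - c i) * c j) :=
    pow_eq_of' (q j i) (f := c i * c j)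
      (by rw [h1, pow_mul, root1 q m hqroot j i, one_pow])
      (by rw [h2, pow_mul, root2 q m hqroot j i, one_pow])
  rw [← Units.val_pow_eq_pow_val, ← Units.val_pow_eq_pow_val, ← Units.val_mul,
    inv_pow, hE, inv_mul_cancel, Units.val_one]
lemma beta_assoc_elem (hqdiag : ∀ i, q i i = 1) (hqinv : ∀ i j, q i j * q j i = 1)
    (hm : ∀ i, 2 ≤ m i)
    (hqroot : ∀ i j, q i j ^ Nat.gcd (m i - 1) (m j - 1) = 1)
    (u v w : QCI k n q m) :
    betaMap q m hqdiag hqinv (u ⊗ₜ[k] (v * w))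
      = betaMap q m hqdiag hqinv ((u * v) ⊗ₜ[k] w) := by
  have hu : u ∈ Submodule.span k (Set.range M) := by rw [span_top q m]; trivial
  have hv : v ∈ Submodule.span k (Set.range M) := by rw [span_top q m]; trivial
  have hw : w ∈ Submodule.span k (Set.range M) := by rw [span_top q m]; trivial
  induction hu using Submodule.span_induction with
  | mem x hx =>
    obtain ⟨a, rfl⟩ := hx
    induction hv using Submodule.span_induction with
    | mem y hy =>
      obtain ⟨b, rfl⟩ := hy
      induction hw using Submodule.span_induction with
      | mem z hz =>
        obtain ⟨c, rfl⟩ := hz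
        rw [mul_monomial, mul_monomial, TensorProduct.tmul_smul,
          ← TensorProduct.smul_tmul', map_smul, map_smul,
          betaMap_monomial q m hqdiag hqinv hm, betaMap_monomial q m hqdiag hqinv hm,
          smul_eq_mul, smul_eq_mul]
        exact Wf_assoc q m hqroot a b c
      | zero => simp
      | add z₁ z₂ _ _ h1 h2 =>
        simp only [mul_add, TensorProduct.tmul_add, map_add, h1, h2]
      | smul r z _ h1 =>
        simp only [mul_smul_comm, TensorProduct.tmul_smul, map_smul, h1]
    | zero => simp
    | add y₁ y₂ _ _ h1 h2 =>
      simp only [add_mul, mul_add, TensorProduct.tmul_add, TensorProduct.add_tmul,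
        map_add, h1, h2]
    | smul r y _ h1 =>
      simp only [smul_mul_assoc, mul_smul_comm, TensorProduct.tmul_smul,
        ← TensorProduct.smul_tmul', map_smul, h1]
  | zero => simp
  | add x₁ x₂ _ _ h1 h2 =>
    simp only [add_mul, TensorProduct.add_tmul, map_add, h1, h2]
  | smul r x _ h1 =>
    simp only [smul_mul_assoc, ← TensorProduct.smul_tmul', map_smul, h1]

lemma nondeg_term (hqdiag : ∀ i, q i i = 1) (hqinv : ∀ i j, q i j * q j i = 1)
    (hm : ∀ i, 2 ≤ m i) (b c : Fin n → ℕ) :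
    (TensorProduct.rid k (QCI k n q m))
        ((TensorProduct.map LinearMap.id (betaMap q m hqdiag hqinv))
          ((TensorProduct.assoc k (QCI k n q m) (QCI k n q m) (QCI k n q m))
            ((gam q m b • (M b ⊗ₜ[k] M (fun l => m l - 1 - b l))) ⊗ₜ[k] M c)))
      = (gam q m b * Wf q m (fun l => m l - 1 - b l) c) • M b := by
  rw [← TensorProduct.smul_tmul', map_smul, map_smul, map_smul,
    TensorProduct.assoc_tmul, TensorProduct.map_tmul, LinearMap.id_apply,
    betaMap_monomial q m hqdiag hqinv hm, TensorProduct.rid_tmul, smul_smul]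

lemma beta_symm_elem (hqdiag : ∀ i, q i i = 1) (hqinv : ∀ i j, q i j * q j i = 1)
    (hm : ∀ i, 2 ≤ m i)
    (hqroot : ∀ i j, q i j ^ Nat.gcd (m i - 1) (m j - 1) = 1)
    (u v : QCI k n q m) :
    betaMap q m hqdiag hqinv (v ⊗ₜ[k] u) = betaMap q m hqdiag hqinv (u ⊗ₜ[k] v) := by
  have hu : u ∈ Submodule.span k (Set.range M) := by rw [span_top q m]; trivial
  have hv : v ∈ Submodule.span k (Set.range M) := by rw [span_top q m]; trivial
  induction hu using Submodule.span_induction with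
  | mem x hx =>
    obtain ⟨a, rfl⟩ := hx
    induction hv using Submodule.span_induction with
    | mem y hy =>
      obtain ⟨b, rfl⟩ := hy
      rw [betaMap_monomial q m hqdiag hqinv hm, betaMap_monomial q m hqdiag hqinv hm,
        Wf_symm q m hqroot]
    | zero => simp
    | add y₁ y₂ _ _ h1 h2 =>
      simp only [TensorProduct.tmul_add, TensorProduct.add_tmul, map_add, h1, h2]
    | smul r y _ h1 =>
      simp only [TensorProduct.tmul_smul, ← TensorProduct.smul_tmul', map_smul, h1]
  | zero => simp
  | add x₁ x₂ _ _ h1 h2 =>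
    simp only [TensorProduct.tmul_add, TensorProduct.add_tmul, map_add, h1, h2]
  | smul r x _ h1 =>
    simp only [TensorProduct.tmul_smul, ← TensorProduct.smul_tmul', map_smul, h1]

end Aux
end TTP


open TTP.Aux in
open TTP in
/-- Corollary 6.6 of the paper: if each `q_{ij}` is a root of
unity whose order divides `gcd(m_i - 1, m_j - 1)`, the quantum complete
intersection `Λ^n_{q,m}` is a symmetric Frobenius algebra, with the explicit
pairing `β(x^a ⊗ x^b) = (∏_{j} ∏_{i<j} q_{ji}^{a_i b_j}) ∏_l δ_{a_l+b_l, m_l-1}`. -/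
theorem quantumCompleteIntersection_symmetric_frobenius
    {k : Type*} [Field k] (n : ℕ) (hn : 2 ≤ n)
    (m : Fin n → ℕ) (hm : ∀ i, 2 ≤ m i)
    (q : Fin n → Fin n → kˣ)
    (hqdiag : ∀ i, q i i = 1)
    (hqinv : ∀ i j, q i j * q j i = 1)
    (hqroot : ∀ i j, q i j ^ Nat.gcd (m i - 1) (m j - 1) = 1) :
    ∃ (β : QCI k n q m ⊗[k] QCI k n q m →ₗ[k] k)
      (α : k →ₗ[k] QCI k n q m ⊗[k] QCI k n q m),
      (∀ a b : Fin n → ℕ,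
        β (qciMonomial k n q m a ⊗ₜ[k] qciMonomial k n q m b)
          = if ∀ l, a l + b l = m l - 1
            then ∏ j : Fin n, ∏ i ∈ Finset.Iio j, ((q j i : k) ^ (a i * b j))
            else 0)
      ∧ PairingAssoc k (LinearMap.mul' k (QCI k n q m)) β
      ∧ PairingNondeg k β α
      ∧ PairingSymm k β := by
  refine ⟨betaMap q m hqdiag hqinv,
    LinearMap.toSpanSingleton k _
      (∑ a ∈ Fintype.piFinset fun i => Finset.range (m i),
        gam q m a • (qciMonomial k n q m a
          ⊗ₜ[k] qciMonomial k n q m (fun l => m l - 1 - a l))),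
    ?_, ?_, ?_, ?_⟩
  · intro a b
    rw [betaMap_monomial q m hqdiag hqinv hm]
    rfl
  · unfold PairingAssoc
    refine TensorProduct.ext' fun x w => ?_
    induction x using TensorProduct.induction_on with
    | zero => simp
    | tmul u v =>
      simp only [LinearMap.comp_apply, LinearEquiv.coe_coe, TensorProduct.assoc_tmul,
        TensorProduct.map_tmul, LinearMap.mul'_apply, LinearMap.id_apply]
      exact beta_assoc_elem q m hqdiag hqinv hm hqroot u v w
    | add x₁ x₂ h1 h2 =>
      simp only [TensorProduct.add_tmul, map_add, h1, h2]
  · unfold PairingNondeg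
    refine LinearMap.ext_on (span_top q m) ?_
    rintro _ ⟨c, rfl⟩
    simp only [LinearMap.comp_apply, LinearEquiv.coe_coe, TensorProduct.lid_symm_apply,
      TensorProduct.map_tmul, LinearMap.toSpanSingleton_apply, one_smul,
      LinearMap.id_apply]
    rw [TensorProduct.sum_tmul, map_sum, map_sum, map_sum,
      Finset.sum_congr rfl fun b _ => nondeg_term q m hqdiag hqinv hm b c]
    by_cases hc : ∀ i, c i < m i
    · rw [Finset.sum_eq_single_of_mem c
        (Fintype.mem_piFinset.2 fun i => Finset.mem_range.2 (hc i))]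
      · rw [Wf_nondeg q m hqroot c hc, one_smul]
      · intro b hb hbc
        have hW : Wf q m (fun l => m l - 1 - b l) c = 0 := by
          rw [Wf, if_neg]
          intro hall
          refine hbc (funext fun l => ?_)
          have hbl : b l < m l := Finset.mem_range.1 (Fintype.mem_piFinset.1 hb l)
          have := hall l
          have := hm l
          omega
        rw [hW, mul_zero, zero_smul]
    · obtain ⟨l0, h0⟩ := not_forall.1 hc
      rw [monomial_eq_zero q m (le_of_not_gt h0)]
      refine Finset.sum_eq_zero fun b hb => ?_
      have hW : Wf q m (fun l => m l - 1 - b l) c = 0 := by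
        rw [Wf, if_neg]
        intro hall
        have := hall l0
        have := hm l0
        omega
      rw [hW, mul_zero, zero_smul]
  · unfold PairingSymm
    refine TensorProduct.ext' fun u v => ?_
    simp only [LinearMap.comp_apply, LinearEquiv.coe_coe, TensorProduct.comm_tmul]
    exact beta_symm_elem q m hqdiag hqinv hm hqroot u v
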